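/- Let p be an odd prime, n ≥ 1, and λ a unit of ZMod (p^n) with λ^(p^n) = 1, and let G = G(λ,n,n). Then every element g = (a,x) of G such that it is not the case that both p divides a and p divides x has order exactly p^n, i.e., orderOf g = p^n. -/

import Mathlib

def IsBeauvilleStructure {G : Type*} [Group G] (x y z a b c : G) : Prop :=
  x * y * z = 1 ∧ a * b * c = 1 ∧
  Subgroup.closure {x, y, z} = ⊤ ∧ Subgroup.closure {a, b, c} = ⊤ ∧
  ∀ u ∈ ({x, y, z} : Set G), ∀ v ∈ ({a, b, c} : Set G), ∀ g : G, ∀ i j : ℤ,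
    u ^ i = g * v ^ j * g⁻¹ → u ^ i = 1

/-- The homomorphism `ZMod (p^n) → (ZMod (p^m))ˣ` sending (the class of) `x` to `λ^x`,
well-defined since `λ^(p^n) = 1`. -/
def zmodUnitHom (p m n : ℕ) (lam : (ZMod (p^m))ˣ) (h : lam ^ (p^n) = 1) :
    Multiplicative (ZMod (p^n)) →* (ZMod (p^m))ˣ :=
  AddMonoidHom.toMultiplicativeLeft
    (ZMod.lift (p^n) ⟨(zmultiplesHom (Additive (ZMod (p^m))ˣ)) (Additive.ofMul lam), by
      show ((p^n : ℕ) : ℤ) • Additive.ofMul lam = 0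
      rw [← ofMul_zpow, zpow_natCast, h]
      rfl⟩)

/-- Additive automorphisms of `R` as multiplicative automorphisms of `Multiplicative R`. -/
def addAutToMulAut (R : Type*) [AddZeroClass R] :
    Multiplicative (AddAut R) →* MulAut (Multiplicative R) where
  toFun e := AddEquiv.toMultiplicative (Multiplicative.toAdd e)
  map_one' := rfl
  map_mul' _ _ := rfl

/-- The action of `ZMod (p^n)` on `ZMod (p^m)` where `x` acts by multiplication by `λ^x`. -/
def beauvilleAut (p m n : ℕ) (lam : (ZMod (p^m))ˣ) (h : lam ^ (p^n) = 1) :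
    Multiplicative (ZMod (p^n)) →* MulAut (Multiplicative (ZMod (p^m))) :=
  ((addAutToMulAut (ZMod (p^m))).comp AddAut.mulLeft).comp (zmodUnitHom p m n lam h)

/-- The semidirect product `G(λ,m,n) = ZMod (p^m) ⋊_λ ZMod (p^n)`. -/
abbrev BeauvilleGroup (p m n : ℕ) (lam : (ZMod (p^m))ˣ) (h : lam ^ (p^n) = 1) :=
  SemidirectProduct (Multiplicative (ZMod (p^m))) (Multiplicative (ZMod (p^n)))
    (beauvilleAut p m n lam h)


open Finset

lemma beauville_apply (p m n : ℕ) (lam : (ZMod (p^m))ˣ) (h : lam ^ (p^n) = 1)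
    (y : Multiplicative (ZMod (p^n))) (b : Multiplicative (ZMod (p^m))) :
    beauvilleAut p m n lam h y b
      = Multiplicative.ofAdd (((zmodUnitHom p m n lam h y : (ZMod (p^m))ˣ) : ZMod (p^m))
          * Multiplicative.toAdd b) := rfl

lemma sdp_pow {N G : Type*} [CommGroup N] [Group G] {φ : G →* MulAut N}
    (g : SemidirectProduct N G φ) (k : ℕ) :
    g ^ k = ⟨∏ i ∈ Finset.range k, φ (g.right ^ i) g.left, g.right ^ k⟩ := by
  induction k with
  | zero => ext <;> simp
  | succ k ih =>
    rw [pow_succ, ih]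
    refine SemidirectProduct.ext ?_ ?_
    · show (∏ i ∈ range k, φ (g.right ^ i) g.left) * φ (g.right ^ k) g.left = _
      rw [Finset.prod_range_succ]
    · show g.right ^ k * g.right = g.right ^ (k + 1)
      rw [pow_succ]

section IntLemmas
open Finset

lemma geom_split {R : Type*} [CommRing R] (W : R) (m k : ℕ) :
    (∑ i ∈ range (m * k), W ^ i)
      = (∑ i ∈ range m, W ^ i) * (∑ j ∈ range k, (W ^ m) ^ j) := by
  induction k with
  | zero => simp
  | succ k ih =>
    rw [Nat.mul_succ, Finset.sum_range_add, ih, Finset.sum_range_succ]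
    have h2 : ∑ x ∈ range m, W ^ (m * k + x) = (W ^ m) ^ k * ∑ x ∈ range m, W ^ x := by
      rw [Finset.mul_sum]
      refine Finset.sum_congr rfl fun x _ => ?_
      rw [pow_add, ← pow_mul]
    rw [h2]; ring

lemma dvd_geom_sub_card {d V : ℤ} (hd : d ∣ V - 1) (m : ℕ) :
    d ∣ (∑ j ∈ range m, V ^ j) - m := by
  have : (∑ j ∈ range m, V ^ j) - (m : ℤ) = ∑ j ∈ range m, (V ^ j - 1) := by
    rw [Finset.sum_sub_distrib]; simp
  rw [this]
  exact Finset.dvd_sum fun j _ => hd.trans (by simpa using sub_dvd_pow_sub_pow V 1 j)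

lemma dvd_pow_sub_one {d V : ℤ} (hd : d ∣ V - 1) (m : ℕ) : d ∣ V ^ m - 1 :=
  hd.trans (by simpa using sub_dvd_pow_sub_pow V 1 m)

lemma lemA {p : ℕ} {W : ℤ} (hW : (p : ℤ) ∣ W - 1) (k : ℕ) :
    (p : ℤ) ^ k ∣ ∑ i ∈ range (p ^ k), W ^ i := by
  induction k with
  | zero => simp
  | succ k ih =>
    rw [pow_succ p k, geom_split W (p ^ k) p, pow_succ ((p:ℤ)) k]
    refine mul_dvd_mul ih ?_
    have h1 : (p : ℤ) ∣ (∑ j ∈ range p, (W ^ p ^ k) ^ j) - p :=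
      dvd_geom_sub_card (dvd_pow_sub_one hW _) p
    have := dvd_add h1 (dvd_refl (p : ℤ))
    simpa using this

lemma lemC {p : ℕ} {t : ℤ} (ht : (p : ℤ) ∣ t - 1) : (p : ℤ) ^ 2 ∣ t ^ p - 1 := by
  rw [← geom_sum_mul t p, sq]
  refine mul_dvd_mul ?_ ht
  have h1 : (p : ℤ) ∣ (∑ j ∈ range p, t ^ j) - p := dvd_geom_sub_card ht p
  have := dvd_add h1 (dvd_refl (p : ℤ))
  simpa using this

lemma lemB {p : ℕ} {W : ℤ} (hW : (p : ℤ) ^ 2 ∣ W - 1) (k : ℕ) :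
    (p : ℤ) ^ (k + 1) ∣ (∑ i ∈ range (p ^ k), W ^ i) - (p : ℤ) ^ k := by
  induction k with
  | zero => simp
  | succ k ih =>
    have hV : (p : ℤ) ^ 2 ∣ W ^ p ^ k - 1 := dvd_pow_sub_one hW _
    have hT : (p : ℤ) ^ 2 ∣ (∑ j ∈ range p, (W ^ p ^ k) ^ j) - p :=
      dvd_geom_sub_card hV p
    have hTp : (p : ℤ) ∣ ∑ j ∈ range p, (W ^ p ^ k) ^ j := by
      have h2 : (p : ℤ) ∣ (∑ j ∈ range p, (W ^ p ^ k) ^ j) - p :=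
        dvd_trans (dvd_pow_self (p:ℤ) two_ne_zero) hT
      have := dvd_add h2 (dvd_refl (p : ℤ))
      simpa using this
    rw [pow_succ p k, geom_split W (p ^ k) p]
    have key : (∑ i ∈ range (p ^ k), W ^ i) * (∑ j ∈ range p, (W ^ p ^ k) ^ j)
        - (p : ℤ) ^ (k + 1)
        = ((∑ i ∈ range (p ^ k), W ^ i) - (p : ℤ) ^ k) * (∑ j ∈ range p, (W ^ p ^ k) ^ j)
          + (p : ℤ) ^ k * ((∑ j ∈ range p, (W ^ p ^ k) ^ j) - p) := by ring
    rw [key]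
    refine dvd_add ?_ ?_
    · rw [pow_succ]
      exact mul_dvd_mul ih hTp
    · have : (p : ℤ) ^ (k + 1 + 1) = (p : ℤ) ^ k * (p : ℤ) ^ 2 := by ring
      rw [this]
      exact mul_dvd_mul_left _ hT

end IntLemmas

lemma val_sub_one_dvd {p n : ℕ} (hp : p.Prime) (hn : 1 ≤ n) {W : ZMod (p^n)}
    (hW : W ^ (p ^ n) = 1) : (p : ℤ) ∣ (W.val : ℤ) - 1 := by
  haveI : Fact p.Prime := ⟨hp⟩
  haveI : NeZero (p ^ n) := ⟨pow_ne_zero n hp.pos.ne'⟩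
  have hdvd : p ∣ p ^ n := dvd_pow_self p (by omega)
  set f := ZMod.castHom hdvd (ZMod p) with hf
  have h1 : f W = 1 := by
    have h2 : (f W) ^ (p ^ n) = 1 := by rw [← map_pow, hW, map_one]
    rw [ZMod.pow_card_pow] at h2
    exact h2
  have h3 : ((W.val : ℤ) : ZMod p) = 1 := by
    push_cast
    rw [ZMod.natCast_val]
    exact h1
  have h4 : (((W.val : ℤ) - 1 : ℤ) : ZMod p) = 0 := by push_cast [h3]; ring
  exact_mod_cast (ZMod.intCast_zmod_eq_zero_iff_dvd _ p).mp h4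

lemma dvd_of_pow_mul_eq_zero {p n : ℕ} (hp : p.Prime) (hn : 1 ≤ n) {a : ZMod (p^n)}
    (ha : (p : ZMod (p^n)) ^ (n-1) * a = 0) : ∃ b, a = (p : ZMod (p^n)) * b := by
  haveI : NeZero (p ^ n) := ⟨pow_ne_zero n hp.pos.ne'⟩
  have h1 : ((p ^ (n-1) * a.val : ℕ) : ZMod (p^n)) = 0 := by
    push_cast [ZMod.natCast_val, ZMod.cast_id]
    exact ha
  rw [ZMod.natCast_eq_zero_iff] at h1
  have h2 : p ∣ a.val := by
    have h3 : p ^ (n-1) * p ∣ p ^ (n-1) * a.val := by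
      rw [← pow_succ, Nat.sub_add_cancel hn]; exact h1
    exact (Nat.mul_dvd_mul_iff_left (pow_pos hp.pos _)).mp h3
  obtain ⟨b, hb⟩ := h2
  refine ⟨(b : ZMod (p^n)), ?_⟩
  have : a = ((a.val : ℕ) : ZMod (p^n)) := by rw [ZMod.natCast_val, ZMod.cast_id]
  rw [this, hb]
  push_cast
  ring

/-- In `G(λ,n,n)` for odd `p`, every element `(a,x)` such that not both `p ∣ a`
and `p ∣ x` has order exactly `p^n`. -/
theorem orderOf_eq_pPow_of_not_divisible
    (p n : ℕ) (hp : p.Prime) (hodd : Odd p) (hn : 1 ≤ n)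
    (lam : (ZMod (p ^ n))ˣ) (h : lam ^ (p ^ n) = 1)
    (g : BeauvilleGroup p n n lam h)
    (hg : ¬ ((∃ b : ZMod (p ^ n), Multiplicative.toAdd g.left = (p : ZMod (p ^ n)) * b) ∧
             (∃ c : ZMod (p ^ n), Multiplicative.toAdd g.right = (p : ZMod (p ^ n)) * c))) :
    orderOf g = p ^ n := by
  haveI : Fact p.Prime := ⟨hp⟩
  haveI : NeZero (p ^ n) := ⟨pow_ne_zero n hp.pos.ne'⟩
  set u := zmodUnitHom p n n lam h with hu
  set a : ZMod (p^n) := Multiplicative.toAdd g.left with ha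
  set x : Multiplicative (ZMod (p^n)) := g.right with hx
  set w : ZMod (p^n) := ((u x : (ZMod (p^n))ˣ) : ZMod (p^n)) with hwdef
  -- every element of Multiplicative (ZMod (p^n)) has p^n-th power 1
  have hord : ∀ y : Multiplicative (ZMod (p^n)), y ^ (p ^ n) = 1 := by
    intro y
    rw [← ofAdd_toAdd y, ← ofAdd_nsmul, nsmul_eq_mul, ZMod.natCast_self, zero_mul, ofAdd_zero]
  -- power formula
  have hpow : ∀ k : ℕ, (g ^ k).left
        = Multiplicative.ofAdd ((∑ i ∈ Finset.range k, w ^ i) * a)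
      ∧ (g ^ k).right = x ^ k := by
    intro k
    rw [sdp_pow]
    constructor
    · show (∏ i ∈ Finset.range k, beauvilleAut p n n lam h (x ^ i) g.left) = _
      rw [Finset.sum_mul, ofAdd_sum]
      refine Finset.prod_congr rfl fun i _ => ?_
      rw [beauville_apply]
      congr 1
      rw [map_pow, Units.val_pow_eq_pow_val]
    · rfl
  have hval : ∀ v : ZMod (p^n), ((v.val : ℤ) : ZMod (p^n)) = v := by
    intro v
    push_cast [ZMod.natCast_val, ZMod.cast_id]
    rfl
  have hw : w ^ (p ^ n) = 1 := by
    have h1 : (u x) ^ (p ^ n) = 1 := by rw [← map_pow, hord x, map_one]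
    rw [hwdef, ← Units.val_pow_eq_pow_val, h1, Units.val_one]
  have hZ : (p : ℤ) ∣ ((w.val : ℤ)) - 1 := val_sub_one_dvd hp hn hw
  -- g ^ (p ^ n) = 1
  have hfin : g ^ (p ^ n) = 1 := by
    obtain ⟨hL, hR⟩ := hpow (p ^ n)
    have hsum : (∑ i ∈ Finset.range (p ^ n), w ^ i) = 0 := by
      have h1 : (p : ℤ) ^ n ∣ ∑ i ∈ Finset.range (p ^ n), ((w.val : ℤ)) ^ i := lemA hZ n
      have h2 : (((∑ i ∈ Finset.range (p ^ n), ((w.val : ℤ)) ^ i : ℤ)) : ZMod (p ^ n)) = 0 := by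
        rw [ZMod.intCast_zmod_eq_zero_iff_dvd]
        exact_mod_cast h1
      rw [← h2]
      push_cast [hval]
      rfl
    refine SemidirectProduct.ext ?_ ?_
    · rw [hL, hsum, zero_mul, ofAdd_zero, SemidirectProduct.one_left]
    · rw [hR, hord x, SemidirectProduct.one_right]
  -- g ^ (p ^ (n-1)) ≠ 1
  have hnot : ¬ g ^ (p ^ (n - 1)) = 1 := by
    intro hone
    apply hg
    obtain ⟨hL, hR⟩ := hpow (p ^ (n - 1))
    have hl : Multiplicative.ofAdd ((∑ i ∈ Finset.range (p ^ (n - 1)), w ^ i) * a) = 1 := by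
      rw [← hL, hone, SemidirectProduct.one_left]
    have hr : x ^ (p ^ (n - 1)) = 1 := by rw [← hR, hone, SemidirectProduct.one_right]
    have hxz : (p : ZMod (p ^ n)) ^ (n - 1) * Multiplicative.toAdd x = 0 := by
      have h1 := congrArg Multiplicative.toAdd hr
      rw [toAdd_pow, toAdd_one, nsmul_eq_mul] at h1
      rw [← h1]
      push_cast
      ring
    obtain ⟨c, hc⟩ := dvd_of_pow_mul_eq_zero hp hn hxz
    refine ⟨?_, ⟨c, hc⟩⟩
    -- now the left component
    have hxofadd : x = (Multiplicative.ofAdd c) ^ p := by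
      rw [← ofAdd_nsmul, nsmul_eq_mul, ← hc, ofAdd_toAdd]
    set v : ZMod (p ^ n) := ((u (Multiplicative.ofAdd c) : (ZMod (p ^ n))ˣ) : ZMod (p ^ n))
      with hvdef
    have hv : v ^ (p ^ n) = 1 := by
      have h1 : (u (Multiplicative.ofAdd c)) ^ (p ^ n) = 1 := by
        rw [← map_pow, hord _, map_one]
      rw [hvdef, ← Units.val_pow_eq_pow_val, h1, Units.val_one]
    have hvd : (p : ℤ) ∣ ((v.val : ℤ)) - 1 := val_sub_one_dvd hp hn hv
    have hwv : w = v ^ p := by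
      rw [hwdef, hxofadd, map_pow, Units.val_pow_eq_pow_val]
    have hB := lemB (lemC hvd) (n - 1)
    rw [Nat.sub_add_cancel hn] at hB
    have hS : (∑ i ∈ Finset.range (p ^ (n - 1)), w ^ i) = (p : ZMod (p ^ n)) ^ (n - 1) := by
      have h1 : (((∑ i ∈ Finset.range (p ^ (n - 1)), ((v.val : ℤ) ^ p) ^ i
            - (p : ℤ) ^ (n - 1) : ℤ)) : ZMod (p ^ n)) = 0 := by
        rw [ZMod.intCast_zmod_eq_zero_iff_dvd]
        exact_mod_cast hB
      push_cast [hval] at h1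
      rw [← hwv] at h1
      linear_combination h1
    have haz : (p : ZMod (p ^ n)) ^ (n - 1) * a = 0 := by
      have h1 := congrArg Multiplicative.toAdd hl
      rw [toAdd_ofAdd, toAdd_one] at h1
      rw [← hS, h1]
    exact dvd_of_pow_mul_eq_zero hp hn haz
  have hfin' : g ^ p ^ (n - 1 + 1) = 1 := by rw [Nat.sub_add_cancel hn]; exact hfin
  have hres := orderOf_eq_prime_pow hnot hfin'
  rwa [Nat.sub_add_cancel hn] at hres
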